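/- Uniqueness up to positive linear transformation: let W be a topological space, S = Δⁿ, and suppose v, w : C(W,S) → C(W,ℝ) are affine maps (v(a·p+(1-a)·q) = a·v(p)+(1-a)·v(q) and similarly for w, for continuous a : W → [0,1]) that both represent the same relation ≺ in the sense that p ≺ q ⟺ v(p)(x) < v(q)(x) for all x ∈ W ⟺ w(p)(x) < w(q)(x) for all x ∈ W. If there exist f, g ∈ C(W,S) with f ≺ g, then there exist continuous α, β : W → ℝ with α(x) > 0 for all x such that w(r) = α·v(r) + β for every r ∈ C(W,S) lying in the order interval [f,g]. -/

import Mathlib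

/-- Uniqueness up to positive linear transformation (Lemma 6): two affine
representations `v, w` of the same relation `≺` (as pointwise strict
inequality of the representing continuous functions) agree up to a continuous
positive linear transformation on the order interval `[f,g]`, whenever some
pair `f ≺ g` exists. -/
theorem representation_unique_up_to_plt {W : Type*} [TopologicalSpace W] {n : ℕ}
    (prec : (W → (Fin n → ℝ)) → (W → (Fin n → ℝ)) → Prop)
    (v w : (W → (Fin n → ℝ)) → (W → ℝ))
    (hvrep : ∀ p q : W → (Fin n → ℝ), Continuous p → Continuous q →
      (∀ x, p x ∈ stdSimplex ℝ (Fin n)) → (∀ x, q x ∈ stdSimplex ℝ (Fin n)) →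
      (prec p q ↔ ∀ x, v p x < v q x))
    (hwrep : ∀ p q : W → (Fin n → ℝ), Continuous p → Continuous q →
      (∀ x, p x ∈ stdSimplex ℝ (Fin n)) → (∀ x, q x ∈ stdSimplex ℝ (Fin n)) →
      (prec p q ↔ ∀ x, w p x < w q x))
    (hvaff : ∀ (a : W → ℝ), Continuous a → (∀ x, a x ∈ Set.Icc (0 : ℝ) 1) →
      ∀ p q : W → (Fin n → ℝ), Continuous p → Continuous q →
        (∀ x, p x ∈ stdSimplex ℝ (Fin n)) → (∀ x, q x ∈ stdSimplex ℝ (Fin n)) →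
        ∀ x, v (fun y => a y • p y + (1 - a y) • q y) x
              = a x * v p x + (1 - a x) * v q x)
    (hwaff : ∀ (a : W → ℝ), Continuous a → (∀ x, a x ∈ Set.Icc (0 : ℝ) 1) →
      ∀ p q : W → (Fin n → ℝ), Continuous p → Continuous q →
        (∀ x, p x ∈ stdSimplex ℝ (Fin n)) → (∀ x, q x ∈ stdSimplex ℝ (Fin n)) →
        ∀ x, w (fun y => a y • p y + (1 - a y) • q y) x
              = a x * w p x + (1 - a x) * w q x)
    (hvcont : ∀ p : W → (Fin n → ℝ), Continuous p →
      (∀ x, p x ∈ stdSimplex ℝ (Fin n)) → Continuous (v p))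
    (hwcont : ∀ p : W → (Fin n → ℝ), Continuous p →
      (∀ x, p x ∈ stdSimplex ℝ (Fin n)) → Continuous (w p))
    (f g : W → (Fin n → ℝ)) (hfc : Continuous f) (hgc : Continuous g)
    (hfs : ∀ x, f x ∈ stdSimplex ℝ (Fin n)) (hgs : ∀ x, g x ∈ stdSimplex ℝ (Fin n))
    (hfg : prec f g) :
    ∃ α β : W → ℝ, Continuous α ∧ Continuous β ∧ (∀ x, 0 < α x) ∧
      ∀ r : W → (Fin n → ℝ), Continuous r → (∀ x, r x ∈ stdSimplex ℝ (Fin n)) →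
        ¬ prec r f → ¬ prec g r →
        ∀ x, w r x = α x * v r x + β x := by
  classical
  have hvfg : ∀ x, v f x < v g x := (hvrep f g hfc hgc hfs hgs).mp hfg
  have hwfg : ∀ x, w f x < w g x := (hwrep f g hfc hgc hfs hgs).mp hfg
  have hδpos : ∀ x, 0 < v g x - v f x := fun x => sub_pos.2 (hvfg x)
  have hvf : Continuous (v f) := hvcont f hfc hfs
  have hvg : Continuous (v g) := hvcont g hgc hgs
  have hwf : Continuous (w f) := hwcont f hfc hfs
  have hwg : Continuous (w g) := hwcont g hgc hgs
  have hconv := convex_stdSimplex ℝ (Fin n)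
  -- key pointwise lemma
  have key : ∀ p q : W → (Fin n → ℝ), Continuous p → Continuous q →
      (∀ x, p x ∈ stdSimplex ℝ (Fin n)) → (∀ x, q x ∈ stdSimplex ℝ (Fin n)) →
      ∀ x0, v p x0 = v q x0 → w q x0 ≤ w p x0 := by
    intro p q hpc hqc hps hqs x0 hv0
    by_contra hlt
    push_neg at hlt
    set c : ℝ := w q x0 - w p x0 with hc
    set K : ℝ := w g x0 - w f x0 with hK
    have hKpos : 0 < K := sub_pos.2 (hwfg x0)
    have hcpos : 0 < c := sub_pos.2 hlt
    set ε0 : ℝ := c / (2 * (K + c)) with hε0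
    have hden : (0:ℝ) < 2 * (K + c) := by nlinarith
    have hε0pos : 0 < ε0 := div_pos hcpos hden
    have hε0lt : ε0 < 1 := by
      rw [hε0, div_lt_one hden]; nlinarith
    have hε0mul : ε0 * (2 * (K + c)) = c := div_mul_cancel₀ _ (ne_of_gt hden)
    set m : W → ℝ := fun x => max 0 (v q x - v p x) with hm
    have hmc : Continuous m := continuous_const.max ((hvcont q hqc hqs).sub (hvcont p hpc hps))
    have hmnn : ∀ x, 0 ≤ m x := fun x => le_max_left _ _
    have hmd : ∀ x, v q x - v p x ≤ m x := fun x => le_max_right _ _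
    have hDpos : ∀ x, 0 < m x + (v g x - v f x) := fun x =>
      add_pos_of_nonneg_of_pos (hmnn x) (hδpos x)
    set εf : W → ℝ := fun x => (m x + ε0 * (v g x - v f x)) / (m x + (v g x - v f x)) with hεf
    have hεfc : Continuous εf :=
      ((hmc.add (continuous_const.mul (hvg.sub hvf))).div (hmc.add (hvg.sub hvf))
        (fun x => ne_of_gt (hDpos x)))
    have hεfmul : ∀ x, εf x * (m x + (v g x - v f x)) = m x + ε0 * (v g x - v f x) :=
      fun x => div_mul_cancel₀ _ (ne_of_gt (hDpos x))
    have hεfpos : ∀ x, 0 < εf x := fun x =>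
      div_pos (add_pos_of_nonneg_of_pos (hmnn x) (mul_pos hε0pos (hδpos x))) (hDpos x)
    have hεfle : ∀ x, εf x ≤ 1 := by
      intro x
      rw [hεf, div_le_one (hDpos x)]
      nlinarith [hδpos x, hmnn x]
    have hεfIcc : ∀ x, εf x ∈ Set.Icc (0:ℝ) 1 := fun x => ⟨(hεfpos x).le, hεfle x⟩
    -- mixtures
    have hpεc : Continuous (fun y => εf y • g y + (1 - εf y) • p y) :=
      (hεfc.smul hgc).add ((continuous_const.sub hεfc).smul hpc)
    have hqεc : Continuous (fun y => εf y • f y + (1 - εf y) • q y) :=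
      (hεfc.smul hfc).add ((continuous_const.sub hεfc).smul hqc)
    have hpεs : ∀ x, (εf x • g x + (1 - εf x) • p x) ∈ stdSimplex ℝ (Fin n) := fun x =>
      hconv (hgs x) (hps x) (hεfpos x).le (by linarith [hεfle x]) (by ring)
    have hqεs : ∀ x, (εf x • f x + (1 - εf x) • q x) ∈ stdSimplex ℝ (Fin n) := fun x =>
      hconv (hfs x) (hqs x) (hεfpos x).le (by linarith [hεfle x]) (by ring)
    have hvpε := hvaff εf hεfc hεfIcc g p hgc hpc hgs hps
    have hvqε := hvaff εf hεfc hεfIcc f q hfc hqc hfs hqs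
    have hvlt : ∀ x, v (fun y => εf y • f y + (1 - εf y) • q y) x
        < v (fun y => εf y • g y + (1 - εf y) • p y) x := by
      intro x
      rw [hvpε x, hvqε x]
      have h1 := hεfmul x
      have h2 := hmd x
      have h3 := hmnn x
      have h4 := hδpos x
      have h5 := hεfle x
      nlinarith [mul_pos hε0pos h4, mul_nonneg (sub_nonneg.2 h5) (by linarith : (0:ℝ) ≤ m x + (v p x - v q x))]
    have hprec : prec (fun y => εf y • f y + (1 - εf y) • q y)
        (fun y => εf y • g y + (1 - εf y) • p y) :=
      (hvrep _ _ hqεc hpεc hqεs hpεs).mpr hvlt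
    have hwlt := (hwrep _ _ hqεc hpεc hqεs hpεs).mp hprec x0
    have hwpε := hwaff εf hεfc hεfIcc g p hgc hpc hgs hps x0
    have hwqε := hwaff εf hεfc hεfIcc f q hfc hqc hfs hqs x0
    rw [hwpε, hwqε] at hwlt
    have hm0 : m x0 = 0 := by
      rw [hm]; simp [hv0]
    have hεf0 : εf x0 = ε0 := by
      rw [hεf]; simp only [hm0, zero_add]
      rw [mul_div_assoc, div_self (ne_of_gt (hδpos x0)), mul_one]
    rw [hεf0] at hwlt
    nlinarith [hwlt, hε0mul, hε0pos, hε0lt, hKpos, hcpos]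
  -- the transformation
  refine ⟨fun x => (w g x - w f x) / (v g x - v f x),
    fun x => w f x - v f x * ((w g x - w f x) / (v g x - v f x)), ?_, ?_, ?_, ?_⟩
  · exact (hwg.sub hwf).div (hvg.sub hvf) (fun x => ne_of_gt (hδpos x))
  · exact hwf.sub (hvf.mul ((hwg.sub hwf).div (hvg.sub hvf) (fun x => ne_of_gt (hδpos x))))
  · exact fun x => div_pos (sub_pos.2 (hwfg x)) (hδpos x)
  · intro r hrc hrs _ _ x0
    have hAB : 0 < v g x0 - v f x0 := hδpos x0
    have habs : 0 ≤ |v r x0 - (v f x0 + v g x0) / 2| := abs_nonneg _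
    have hlden : 0 < (v g x0 - v f x0) + 2 * |v r x0 - (v f x0 + v g x0) / 2| := by linarith
    obtain ⟨lam, hlam⟩ : ∃ l : ℝ,
        l = (v g x0 - v f x0) / ((v g x0 - v f x0) + 2 * |v r x0 - (v f x0 + v g x0) / 2|) :=
      ⟨_, rfl⟩
    have hlampos : 0 < lam := hlam ▸ div_pos hAB hlden
    have hlamle : lam ≤ 1 := by
      rw [hlam, div_le_one hlden]; linarith
    have hlammul : lam * ((v g x0 - v f x0) + 2 * |v r x0 - (v f x0 + v g x0) / 2|)
        = v g x0 - v f x0 := by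
      rw [hlam]; exact div_mul_cancel₀ _ (ne_of_gt hlden)
    have habs2 : |lam * (v r x0 - (v f x0 + v g x0) / 2)| ≤ (v g x0 - v f x0) / 2 := by
      rw [abs_mul, abs_of_pos hlampos, hlam, div_mul_eq_mul_div,
        div_le_div_iff₀ hlden (by norm_num : (0:ℝ) < 2)]
      nlinarith
    have habs3 := abs_le.1 habs2
    obtain ⟨c0, hc0⟩ : ∃ c : ℝ,
        c = (lam * v r x0 + (1 - lam) * ((v f x0 + v g x0) / 2) - v f x0) / (v g x0 - v f x0) :=
      ⟨_, rfl⟩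
    have hc0mul : c0 * (v g x0 - v f x0)
        = lam * v r x0 + (1 - lam) * ((v f x0 + v g x0) / 2) - v f x0 := by
      rw [hc0]; exact div_mul_cancel₀ _ (ne_of_gt hAB)
    have hc0nn : 0 ≤ c0 := by
      rw [hc0]
      apply div_nonneg _ hAB.le
      nlinarith [habs3.1]
    have hc0le : c0 ≤ 1 := by
      rw [hc0, div_le_one hAB]
      nlinarith [habs3.2]
    -- q0 = (1/2) f + (1/2) g
    have hq0c : Continuous (fun y => ((1:ℝ)/2) • f y + (1 - (1:ℝ)/2) • g y) :=
      Continuous.add (f := fun y => ((1:ℝ)/2) • f y) (g := fun y => (1 - (1:ℝ)/2) • g y)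
        (Continuous.smul (f := fun _ => ((1:ℝ)/2)) continuous_const hfc) (Continuous.smul (f := fun _ => (1 - (1:ℝ)/2)) continuous_const hgc)
    have hq0s : ∀ x, (((1:ℝ)/2) • f x + (1 - (1:ℝ)/2) • g x) ∈ stdSimplex ℝ (Fin n) := fun x =>
      hconv (hfs x) (hgs x) (by norm_num) (by norm_num) (by ring)
    have hvq0 := hvaff (fun _ => (1:ℝ)/2) continuous_const (fun _ => by norm_num) f g hfc hgc hfs hgs
    have hwq0 := hwaff (fun _ => (1:ℝ)/2) continuous_const (fun _ => by norm_num) f g hfc hgc hfs hgs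
    -- p = lam r + (1-lam) q0
    have hpc : Continuous (fun y => lam • r y + (1 - lam) • (((1:ℝ)/2) • f y + (1 - (1:ℝ)/2) • g y)) :=
      Continuous.add (f := fun y => lam • r y) (g := fun y => (1 - lam) • (((1:ℝ)/2) • f y + (1 - (1:ℝ)/2) • g y))
        (Continuous.smul (f := fun _ => lam) continuous_const hrc) (Continuous.smul (f := fun _ => (1 - lam)) continuous_const hq0c)
    have hps : ∀ x, (lam • r x + (1 - lam) • (((1:ℝ)/2) • f x + (1 - (1:ℝ)/2) • g x)) ∈ stdSimplex ℝ (Fin n) :=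
      fun x => hconv (hrs x) (hq0s x) hlampos.le (by linarith) (by ring)
    have hvp := hvaff (fun _ => lam) continuous_const (fun _ => ⟨hlampos.le, hlamle⟩) r
      (fun y => ((1:ℝ)/2) • f y + (1 - (1:ℝ)/2) • g y) hrc hq0c hrs hq0s
    have hwp := hwaff (fun _ => lam) continuous_const (fun _ => ⟨hlampos.le, hlamle⟩) r
      (fun y => ((1:ℝ)/2) • f y + (1 - (1:ℝ)/2) • g y) hrc hq0c hrs hq0s
    -- qq = c0 g + (1-c0) f
    have hqqc : Continuous (fun y => c0 • g y + (1 - c0) • f y) :=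
      Continuous.add (f := fun y => c0 • g y) (g := fun y => (1 - c0) • f y)
        (Continuous.smul (f := fun _ => c0) continuous_const hgc) (Continuous.smul (f := fun _ => (1 - c0)) continuous_const hfc)
    have hqqs : ∀ x, (c0 • g x + (1 - c0) • f x) ∈ stdSimplex ℝ (Fin n) := fun x =>
      hconv (hgs x) (hfs x) hc0nn (by linarith) (by ring)
    have hvqq := hvaff (fun _ => c0) continuous_const (fun _ => ⟨hc0nn, hc0le⟩) g f hgc hfc hgs hfs
    have hwqq := hwaff (fun _ => c0) continuous_const (fun _ => ⟨hc0nn, hc0le⟩) g f hgc hfc hgs hfs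
    have hveq : v (fun y => lam • r y + (1 - lam) • (((1:ℝ)/2) • f y + (1 - (1:ℝ)/2) • g y)) x0
        = v (fun y => c0 • g y + (1 - c0) • f y) x0 := by
      rw [hvp x0, hvqq x0, hvq0 x0]
      linear_combination -hc0mul
    have h1 := key _ _ hpc hqqc hps hqqs x0 hveq
    have h2 := key _ _ hqqc hpc hqqs hps x0 hveq.symm
    have hweq : w (fun y => lam • r y + (1 - lam) • (((1:ℝ)/2) • f y + (1 - (1:ℝ)/2) • g y)) x0
        = w (fun y => c0 • g y + (1 - c0) • f y) x0 := le_antisymm h2 h1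
    rw [hwp x0, hwqq x0, hwq0 x0] at hweq
    have hlamne : lam ≠ 0 := ne_of_gt hlampos
    have h3 : lam * (w r x0 * (v g x0 - v f x0))
        = lam * ((w g x0 - w f x0) * v r x0
            + (w f x0 * (v g x0 - v f x0) - v f x0 * (w g x0 - w f x0))) := by
      linear_combination (v g x0 - v f x0) * hweq + (w g x0 - w f x0) * hc0mul
    have hmain := mul_left_cancel₀ hlamne h3
    rw [eq_div_iff (ne_of_gt hAB)] at *
    field_simp
    linear_combination hmain
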